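/- Let G = {(x,0) ∈ ℝ² : x ∈ ℝ} ∪ {(x,1) ∈ ℝ² : x ≥ 0} and V = {(x,0) ∈ ℝ² : x ∈ ℝ} ∪ {(x,1) ∈ ℝ² : x > 0}. Then V ≤ G and G ≤ V (via the translation (x,y) ↦ (x+1,y)), but there is no surjective isometry f : ℝ² → ℝ² with f(G) = V. Hence G is not a good set, even though G is a union of two strongly good sets. -/
import Mathlib


open Set Function

abbrev Plane := EuclideanSpace ℝ (Fin 2)

/-- Geometric equality: some surjective isometry of the plane maps `S₁` onto `S₂`. -/
def GeomEq (S₁ S₂ : Set Plane) : Prop :=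
  ∃ f : Plane → Plane, Isometry f ∧ Function.Surjective f ∧ f '' S₁ = S₂

/-- `S₁` is equal to or smaller than `S₂`: some surjective isometry maps `S₁` into `S₂`. -/
def GeomLe (S₁ S₂ : Set Plane) : Prop :=
  ∃ f : Plane → Plane, Isometry f ∧ Function.Surjective f ∧ f '' S₁ ⊆ S₂

/-- A figure is good if `A ≤ B` and `B ≤ A` imply `A ≈ B` for every figure `B`. -/
def IsGood (A : Set Plane) : Prop :=
  ∀ B : Set Plane, GeomLe A B → GeomLe B A → GeomEq A B

/-- A figure is strongly good if every surjective isometry mapping it into itself maps it onto itself. -/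
def IsStronglyGood (A : Set Plane) : Prop :=
  ∀ f : Plane → Plane, Isometry f → Function.Surjective f → f '' A ⊆ A → f '' A = A

/-- Example 1.6: for `G = {(x,0) : x ∈ ℝ} ∪ {(x,1) : x ≥ 0}` and
`V = {(x,0) : x ∈ ℝ} ∪ {(x,1) : x > 0}` we have `V ≤ G` and `G ≤ V`
(via the translation `(x,y) ↦ (x+1,y)`), but `G` is not geometrically equal to `V`;
hence `G` is not a good set. -/
theorem union_not_good :
    let G : Set Plane := {p | p 1 = 0} ∪ {p | 0 ≤ p 0 ∧ p 1 = 1}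
    let V : Set Plane := {p | p 1 = 0} ∪ {p | 0 < p 0 ∧ p 1 = 1}
    GeomLe V G ∧ GeomLe G V ∧ ¬ GeomEq G V ∧ ¬ IsGood G := by
  intro G V
  -- G is closed
  have hcont1 : Continuous (fun p : Plane => p 1) :=
    (EuclideanSpace.proj (1 : Fin 2) : _ →L[ℝ] ℝ).continuous
  have hcont0 : Continuous (fun p : Plane => p 0) :=
    (EuclideanSpace.proj (0 : Fin 2) : _ →L[ℝ] ℝ).continuous
  have hG : IsClosed G := by
    apply IsClosed.union
    · exact isClosed_eq hcont1 continuous_const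
    · exact IsClosed.inter (isClosed_le continuous_const hcont0)
        (isClosed_eq hcont1 continuous_const)
  -- V is not closed
  have hp : (EuclideanSpace.single (1 : Fin 2) (1 : ℝ) : Plane) ∈ closure V := by
    rw [Metric.mem_closure_iff]
    intro ε hε
    refine ⟨EuclideanSpace.single 1 1 + EuclideanSpace.single 0 (ε / 2), Or.inr ⟨?_, ?_⟩, ?_⟩
    · simp [EuclideanSpace.single_apply]
      linarith
    · simp [EuclideanSpace.single_apply]
    · rw [dist_eq_norm]
      simp only [add_sub_cancel_left, sub_add_cancel_left, norm_neg]
      rw [EuclideanSpace.norm_single]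
      rw [Real.norm_eq_abs, abs_of_pos (by linarith)]
      linarith
  have hpV : (EuclideanSpace.single (1 : Fin 2) (1 : ℝ) : Plane) ∉ V := by
    rintro (h | ⟨h0, h1⟩)
    · simp only [mem_setOf_eq, EuclideanSpace.single_apply] at h
      norm_num at h
    · simp only [EuclideanSpace.single_apply] at h0
      norm_num at h0
  have hV : ¬ IsClosed V := fun h => hpV (h.closure_eq ▸ hp)
  -- No geometric equality
  have hne : ¬ GeomEq G V := by
    rintro ⟨f, hf, hsurj, himg⟩
    exact hV (himg ▸ hf.isClosedEmbedding.isClosedMap G hG)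
  -- V ≤ G
  have hVG : GeomLe V G := by
    refine ⟨id, isometry_id, surjective_id, ?_⟩
    rw [image_id]
    rintro p (h | ⟨h0, h1⟩)
    · exact Or.inl h
    · exact Or.inr ⟨le_of_lt h0, h1⟩
  -- G ≤ V via translation
  have hGV : GeomLe G V := by
    refine ⟨fun p => p + EuclideanSpace.single 0 1, isometry_add_right _, ?_, ?_⟩
    · intro y
      exact ⟨y - EuclideanSpace.single 0 1, by simp⟩
    · rintro q ⟨p, hp', rfl⟩
      rcases hp' with h | ⟨h0, h1⟩
      · left
        simp only [mem_setOf_eq] at h ⊢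
        simp [EuclideanSpace.single_apply, h]
      · right
        constructor
        · simp only [PiLp.add_apply, EuclideanSpace.single_apply]
          norm_num
          linarith
        · simp only [PiLp.add_apply, EuclideanSpace.single_apply]
          simp [h1]
  exact ⟨hVG, hGV, hne, fun hgood => hne (hgood V hGV hVG)⟩
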